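/- The normalized polynomials p_n := (-1)^n/(n+1) · q_n form an Appell sequence: each p_n is monic of degree n and p_n'(x) = n · p_{n-1}(x) for all n ≥ 1 and real x. -/

import Mathlib

open Finset Polynomial Real

noncomputable def qPoly (n : ℕ) : Polynomial ℝ :=
  (-1 : ℝ)^n • ∑ k ∈ (Finset.range (n+1)).filter (fun k => Even k),
    Polynomial.C (((n+1).choose (k+1) : ℝ) * (-1 : ℝ)^(k/2)) * Polynomial.X^(n-k)

noncomputable def pPoly (n : ℕ) : Polynomial ℝ := ((-1 : ℝ)^n / (n + 1)) • qPoly n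

lemma pPoly_eq (n : ℕ) : pPoly n =
    ∑ k ∈ (Finset.range (n+1)).filter (fun k => Even k),
      Polynomial.C (((n+1).choose (k+1) : ℝ) * (-1 : ℝ)^(k/2) / (n+1)) * Polynomial.X^(n-k) := by
  unfold pPoly qPoly
  rw [smul_smul, Finset.smul_sum]
  refine Finset.sum_congr rfl fun k hk => ?_
  rw [Polynomial.smul_eq_C_mul, ← mul_assoc, ← Polynomial.C_mul]
  congr 2
  have h1 : ((-1:ℝ)^n) * ((-1:ℝ)^n) = 1 := by
    rw [← pow_add, ← two_mul, pow_mul]; norm_num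
  have hn1 : (n:ℝ) + 1 ≠ 0 := by positivity
  field_simp
  linear_combination (↑((n + 1).choose (k + 1)) : ℝ) * h1

lemma coeff_pPoly (n j : ℕ) : (pPoly n).coeff j =
    if j ≤ n ∧ Even (n - j) then
      ((n+1).choose (n-j+1) : ℝ) * (-1:ℝ)^((n-j)/2) / (n+1) else 0 := by
  rw [pPoly_eq, Polynomial.finset_sum_coeff]
  simp only [Polynomial.coeff_C_mul, Polynomial.coeff_X_pow, mul_ite, mul_one, mul_zero]
  by_cases h : j ≤ n ∧ Even (n - j)
  · rw [if_pos h]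
    rw [Finset.sum_eq_single_of_mem (n - j)]
    · rw [if_pos (Nat.sub_sub_self h.1).symm]
    · simp only [Finset.mem_filter, Finset.mem_range, Nat.lt_succ_iff]
      exact ⟨Nat.sub_le n j, h.2⟩
    · intro k hk hne
      rw [if_neg]
      intro hjk
      apply hne
      simp only [Finset.mem_filter, Finset.mem_range, Nat.lt_succ_iff] at hk
      omega
  · rw [if_neg h]
    apply Finset.sum_eq_zero
    intro k hk
    rw [if_neg]
    intro hjk
    simp only [Finset.mem_filter, Finset.mem_range, Nat.lt_succ_iff] at hk
    apply h
    refine ⟨by omega, ?_⟩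
    have : n - j = k := by omega
    rw [this]; exact hk.2

lemma natDegree_pPoly_le (n : ℕ) : (pPoly n).natDegree ≤ n := by
  rw [pPoly_eq]
  refine Polynomial.natDegree_sum_le_of_forall_le _ _ fun k hk => ?_
  refine (Polynomial.natDegree_C_mul_le _ _).trans ?_
  simpa using Nat.sub_le n k

lemma coeff_pPoly_self (n : ℕ) : (pPoly n).coeff n = 1 := by
  rw [coeff_pPoly]
  simp only [le_refl, Nat.sub_self, Nat.choose_one_right]
  norm_num
  change (n:ℝ) + 1 ≠ 0
  positivity

lemma derivative_pPoly (n : ℕ) (hn : 1 ≤ n) :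
    (pPoly n).derivative = (n : ℝ) • pPoly (n-1) := by
  ext j
  rw [Polynomial.coeff_derivative, Polynomial.coeff_smul, smul_eq_mul, coeff_pPoly, coeff_pPoly]
  have heq : n - (j+1) = n - 1 - j := by omega
  by_cases h : j + 1 ≤ n ∧ Even (n - (j+1))
  · rw [if_pos h, if_pos ⟨by omega, heq ▸ h.2⟩, heq]
    set m := n - 1 - j with hm
    have h1 : (n+1).choose (m+1) * (n - m) = (n+1) * n.choose (m+1) := by
      calc (n+1).choose (m+1) * (n - m)
          = (n+1).choose (m+1) * ((n+1) - (m+1)) := by congr 1; omega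
        _ = (n+1).choose (m+1+1) * (m+1+1) := (Nat.choose_succ_right_eq _ _).symm
        _ = (n+1) * n.choose (m+1) := (Nat.add_one_mul_choose_eq n (m+1)).symm
    have hj : j + 1 = n - m := by omega
    have key : ((n+1).choose (m+1) : ℝ) * (j+1) = (n+1) * (n.choose (m+1) : ℝ) := by
      have h2 : (n+1).choose (m+1) * (j+1) = (n+1) * n.choose (m+1) := by
        rw [hj]; exact h1
      exact_mod_cast h2
    have hn0 : (n:ℝ) ≠ 0 := by positivity
    have hn1 : (n:ℝ) + 1 ≠ 0 := by positivity
    push_cast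
    field_simp
    rw [Nat.sub_add_cancel hn, Nat.cast_sub hn]
    push_cast
    linear_combination (n:ℝ) * key
  · rw [if_neg h, if_neg, mul_zero, zero_mul]
    intro h'
    exact h ⟨by omega, heq ▸ h'.2⟩

theorem pPoly_appell :
    (∀ n : ℕ, (pPoly n).Monic ∧ (pPoly n).natDegree = n) ∧
    (∀ n : ℕ, 1 ≤ n → ∀ x : ℝ,
      deriv (fun y => (pPoly n).eval y) x = n * (pPoly (n - 1)).eval x) := by
  constructor
  · intro n
    have hle := natDegree_pPoly_le n
    have hc := coeff_pPoly_self n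
    have hm : (pPoly n).Monic :=
      Polynomial.monic_of_natDegree_le_of_coeff_eq_one n hle hc
    exact ⟨hm, le_antisymm hle (Polynomial.le_natDegree_of_ne_zero (by rw [hc]; norm_num))⟩
  · intro n hn x
    rw [Polynomial.deriv, derivative_pPoly n hn]
    simp [smul_eq_mul]
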